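/- Suppose the hidden variables are independent, i.e., P_HG = p qᵀ for vectors p, q ∈ ℝ^k. Then the nuclear norm quartet test succeeds: ‖A‖* ≤ ‖B‖* and ‖A‖* ≤ ‖C‖*. (Indeed ‖A‖* = ‖A‖_F = ‖B‖_F ≤ ‖B‖*, since A has rank at most 1 and A, B, C consist of the same entries.) -/

import Mathlib

/-- The nuclear norm of a real matrix: the sum of its singular values, i.e. the sum of the
square roots of the eigenvalues of `Mᴴ * M`. -/
noncomputable def nuclearNorm {α β : Type*} [Fintype α] [Fintype β] [DecidableEq β]
    (M : Matrix α β ℝ) : ℝ :=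
  ∑ i, Real.sqrt ((Matrix.isHermitian_conjTranspose_mul_self M).eigenvalues i)

lemma my_sqrt_add_le {a b : ℝ} (ha : 0 ≤ a) (hb : 0 ≤ b) :
    Real.sqrt (a + b) ≤ Real.sqrt a + Real.sqrt b := by
  have h : a + b ≤ (Real.sqrt a + Real.sqrt b) ^ 2 := by
    rw [add_sq, Real.sq_sqrt ha, Real.sq_sqrt hb]
    nlinarith [Real.sqrt_nonneg a, Real.sqrt_nonneg b]
  calc Real.sqrt (a + b) ≤ Real.sqrt ((Real.sqrt a + Real.sqrt b) ^ 2) := Real.sqrt_le_sqrt h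
    _ = _ := Real.sqrt_sq (by positivity)

lemma my_sqrt_sum_le {ι : Type*} (s : Finset ι) (f : ι → ℝ) (hf : ∀ i ∈ s, 0 ≤ f i) :
    Real.sqrt (∑ i ∈ s, f i) ≤ ∑ i ∈ s, Real.sqrt (f i) := by
  induction s using Finset.cons_induction with
  | empty => simp
  | cons a s ha ih =>
    rw [Finset.sum_cons, Finset.sum_cons]
    refine le_trans (my_sqrt_add_le (hf a (Finset.mem_cons_self _ _))
      (Finset.sum_nonneg fun i hi => hf i (Finset.mem_cons_of_mem hi))) ?_
    exact add_le_add_right (ih fun i hi => hf i (Finset.mem_cons_of_mem hi)) _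

lemma my_trace_eq_sum_eigenvalues {m : Type*} [Fintype m] [DecidableEq m]
    {A : Matrix m m ℝ} (hA : A.IsHermitian) :
    A.trace = ∑ i, hA.eigenvalues i := by
  conv_lhs => rw [hA.spectral_theorem]
  rw [Unitary.conjStarAlgAut_apply, Matrix.trace_mul_cycle, Unitary.coe_star_mul_self, Matrix.one_mul]
  simp [Matrix.trace_diagonal]

lemma my_sum_eigenvalues_eq {α β : Type*} [Fintype α] [Fintype β] [DecidableEq β]
    (M : Matrix α β ℝ) :
    ∑ i, (Matrix.isHermitian_conjTranspose_mul_self M).eigenvalues i = ∑ i, ∑ j, M i j ^ 2 := by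
  rw [← my_trace_eq_sum_eigenvalues]
  simp only [Matrix.trace, Matrix.diag, Matrix.mul_apply, Matrix.conjTranspose_apply,
    star_trivial, sq]
  exact Finset.sum_comm

lemma my_sqrt_frob_le_nuclearNorm {α β : Type*} [Fintype α] [Fintype β] [DecidableEq β]
    (M : Matrix α β ℝ) :
    Real.sqrt (∑ i, ∑ j, M i j ^ 2) ≤ nuclearNorm M := by
  rw [← my_sum_eigenvalues_eq]
  exact my_sqrt_sum_le _ _ fun i _ => Matrix.eigenvalues_conjTranspose_mul_self_nonneg M i

lemma my_sum_sqrt_le_of_card {ι : Type*} [Fintype ι] (f : ι → ℝ) (hf : ∀ i, 0 ≤ f i)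
    (h : Fintype.card {i // f i ≠ 0} ≤ 1) :
    ∑ i, Real.sqrt (f i) ≤ Real.sqrt (∑ i, f i) := by
  by_cases hz : ∀ i, f i = 0
  · simp [hz]
  push_neg at hz
  obtain ⟨j, hj⟩ := hz
  have hone : ∀ i, i ≠ j → f i = 0 := by
    intro i hij
    by_contra hi
    exact hij (congrArg Subtype.val (Fintype.card_le_one_iff.mp h ⟨i, hi⟩ ⟨j, hj⟩))
  have h1 : ∑ i, Real.sqrt (f i) = Real.sqrt (f j) :=
    Finset.sum_eq_single j (fun i _ hij => by rw [hone i hij, Real.sqrt_zero])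
      (by simp)
  have h2 : ∑ i, f i = f j :=
    Finset.sum_eq_single j (fun i _ hij => hone i hij) (by simp)
  rw [h1, h2]

lemma my_nuclearNorm_vecMulVec_le {α β : Type*} [Fintype α] [Fintype β] [DecidableEq β]
    (u : α → ℝ) (v : β → ℝ) :
    nuclearNorm (Matrix.vecMulVec u v) ≤
      Real.sqrt (∑ i, ∑ j, (Matrix.vecMulVec u v) i j ^ 2) := by
  rw [← my_sum_eigenvalues_eq]
  refine my_sum_sqrt_le_of_card _
    (fun i => Matrix.eigenvalues_conjTranspose_mul_self_nonneg _ i) ?_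
  rw [← Matrix.IsHermitian.rank_eq_card_non_zero_eigs]
  rw [Matrix.rank_conjTranspose_mul_self]
  calc (Matrix.vecMulVec u v).rank
      = (Matrix.replicateCol (Fin 1) u * Matrix.replicateRow (Fin 1) v).rank := by
        rw [Matrix.vecMulVec_eq (Fin 1)]; rfl
    _ ≤ (Matrix.replicateCol (Fin 1) u).rank := Matrix.rank_mul_le_left _ _
    _ ≤ Fintype.card (Fin 1) := Matrix.rank_le_card_width _
    _ = 1 := Fintype.card_fin 1

/-- When the hidden variables are independent (`P_HG = p qᵀ`), the nuclear norm quartet test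
succeeds: `‖A‖* ≤ ‖B‖*` and `‖A‖* ≤ ‖C‖*`. -/
theorem nuclear_norm_test_independent (n k : ℕ) (hn : 0 < n) (hk : 0 < k)
    (P1 P2 P3 P4 : Matrix (Fin n) (Fin k) ℝ) (p q : Fin k → ℝ)
    (PHG : Matrix (Fin k) (Fin k) ℝ) (hPHG : PHG = Matrix.vecMulVec p q)
    (A B C : Matrix (Fin n × Fin n) (Fin n × Fin n) ℝ)
    (hA : ∀ x1 x2 x3 x4, A (x1, x2) (x3, x4) =
      ∑ h, ∑ g, P1 x1 h * P2 x2 h * PHG h g * P3 x3 g * P4 x4 g)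
    (hB : ∀ x1 x2 x3 x4, B (x1, x3) (x2, x4) =
      ∑ h, ∑ g, P1 x1 h * P2 x2 h * PHG h g * P3 x3 g * P4 x4 g)
    (hC : ∀ x1 x2 x3 x4, C (x1, x4) (x2, x3) =
      ∑ h, ∑ g, P1 x1 h * P2 x2 h * PHG h g * P3 x3 g * P4 x4 g) :
    nuclearNorm A ≤ nuclearNorm B ∧ nuclearNorm A ≤ nuclearNorm C := by
  set u : Fin n × Fin n → ℝ := fun x => ∑ h, P1 x.1 h * P2 x.2 h * p h with hu
  set v : Fin n × Fin n → ℝ := fun x => ∑ g, q g * P3 x.1 g * P4 x.2 g with hv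
  have hAuv : A = Matrix.vecMulVec u v := by
    ext ⟨x1, x2⟩ ⟨x3, x4⟩
    rw [hA, Matrix.vecMulVec_apply, hu, hv]
    simp only [hPHG, Matrix.vecMulVec_apply]
    rw [Finset.sum_mul_sum]
    exact Finset.sum_congr rfl fun h _ => Finset.sum_congr rfl fun g _ => by ring
  -- Frobenius norms agree
  have frobAB : ∑ i, ∑ j, A i j ^ 2 = ∑ i, ∑ j, B i j ^ 2 := by
    simp only [Fintype.sum_prod_type]
    simp only [hA, hB]
    exact Finset.sum_congr rfl fun x1 _ => Finset.sum_comm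
  have frobAC : ∑ i, ∑ j, A i j ^ 2 = ∑ i, ∑ j, C i j ^ 2 := by
    simp only [Fintype.sum_prod_type]
    simp only [hA, hC]
    refine Finset.sum_congr rfl fun x1 _ => ?_
    conv_rhs => rw [Finset.sum_comm]
    exact Finset.sum_congr rfl fun x2 _ => Finset.sum_comm
  have key : nuclearNorm A ≤ Real.sqrt (∑ i, ∑ j, A i j ^ 2) := by
    rw [hAuv]; exact my_nuclearNorm_vecMulVec_le u v
  constructor
  · calc nuclearNorm A ≤ Real.sqrt (∑ i, ∑ j, A i j ^ 2) := key
      _ = Real.sqrt (∑ i, ∑ j, B i j ^ 2) := by rw [frobAB]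
      _ ≤ nuclearNorm B := my_sqrt_frob_le_nuclearNorm B
  · calc nuclearNorm A ≤ Real.sqrt (∑ i, ∑ j, A i j ^ 2) := key
      _ = Real.sqrt (∑ i, ∑ j, C i j ^ 2) := by rw [frobAC]
      _ ≤ nuclearNorm C := my_sqrt_frob_le_nuclearNorm C
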